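/- Let (G,·,e,⊙) be a left group-e-semigroup and let Δ_e := {x·(e⊙x)⁻¹ : x ∈ G} (inverses in the group (G,·)). Then Δ_e is a normal subgroup of (G,·); for all x,y ∈ G one has x⁻¹·y ∈ Δ_e if and only if e⊙x = e⊙y; and the map x ↦ e⊙x induces a well-defined bijection φ from the quotient group G/Δ_e onto e⊙G = {e⊙x : x ∈ G} satisfying φ(x̄) = e⊙x and φ(x̄·ȳ) = φ(x̄)⊙φ(ȳ) for all x,y ∈ G; thus G/Δ_e is isomorphic to the group (e⊙G,⊙). -/
import Mathlib


/-- Let `(G, ·, e, ⊙)` be a left group-`e`-semigroup (group identity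
`e = 1`) and `Δ_e := {x · (e ⊙ x)⁻¹ : x ∈ G}`. Then `Δ_e` is a normal subgroup of
`(G, ·)`; for all `x, y` one has `x⁻¹ · y ∈ Δ_e ↔ e ⊙ x = e ⊙ y`; and `x ↦ e ⊙ x`
induces a well-defined bijection `φ` from `G / Δ_e` onto `e ⊙ G` with
`φ(x̄) = e ⊙ x` and `φ(x̄ · ȳ) = φ(x̄) ⊙ φ(ȳ)`; thus `G / Δ_e ≅ (e ⊙ G, ⊙)`. -/
theorem stmt_13 {G : Type*} [Group G] (op : G → G → G)
    (hassoc : ∀ x y z : G, op (op x y) z = op x (op y z))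
    (hjoin : ∀ x y : G, op 1 (x * y) = op 1 (op x y)) :
    (∃ N : Subgroup G, N.Normal ∧
      (N : Set G) = {d : G | ∃ x : G, d = x * (op 1 x)⁻¹}) ∧
    (∀ x y : G, x⁻¹ * y ∈ {d : G | ∃ z : G, d = z * (op 1 z)⁻¹} ↔ op 1 x = op 1 y) ∧
    (∀ N : Subgroup G, N.Normal →
      (N : Set G) = {d : G | ∃ x : G, d = x * (op 1 x)⁻¹} →
      ∃ φ : G ⧸ N → G,
        (∀ x : G, φ (QuotientGroup.mk x) = op 1 x) ∧
        Function.Injective φ ∧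
        Set.range φ = Set.range (op 1) ∧
        ∀ x y : G, φ (QuotientGroup.mk (x * y)) =
          op (φ (QuotientGroup.mk x)) (φ (QuotientGroup.mk y))) := by
  -- basic identities
  have L0 : ∀ x y : G, op 1 (x * y) = op (op 1 x) y := fun x y =>
    (hjoin x y).trans (hassoc 1 x y).symm
  have Lid : ∀ x : G, op (op 1 x) 1 = op 1 x := fun x => by
    have := L0 x 1; rw [mul_one] at this; exact this.symm
  have L2 : ∀ x : G, op 1 (op 1 x) = op 1 x := fun x => by
    have := hjoin 1 x; rw [one_mul] at this; exact this.symm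
  have L1 : ∀ x y : G, op 1 (x * y) = op (op 1 x) (op 1 y) := fun x y => by
    rw [L0, ← Lid x, hassoc, Lid]
  -- membership characterization
  have mem : ∀ d : G, (∃ z : G, d = z * (op 1 z)⁻¹) ↔ op 1 d = op 1 1 := by
    intro d
    constructor
    · rintro ⟨z, rfl⟩
      have hz : op 1 z = op (op 1 (z * (op 1 z)⁻¹)) (op 1 z) := by
        conv_lhs => rw [show z = (z * (op 1 z)⁻¹) * op 1 z by group]
        rw [L1, L2]
      have hdz : op 1 ((z * (op 1 z)⁻¹) * z) = op 1 z := by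
        rw [L1]; exact hz.symm
      calc op 1 (z * (op 1 z)⁻¹)
          = op 1 (((z * (op 1 z)⁻¹) * z) * z⁻¹) := by group
        _ = op (op 1 ((z * (op 1 z)⁻¹) * z)) (op 1 z⁻¹) := L1 _ _
        _ = op (op 1 z) (op 1 z⁻¹) := by rw [hdz]
        _ = op 1 (z * z⁻¹) := (L1 _ _).symm
        _ = op 1 1 := by rw [mul_inv_cancel]
    · intro hd
      refine ⟨d * op 1 1, ?_⟩
      have : op 1 (d * op 1 1) = op 1 1 := by
        rw [L1, L2, hd, ← L1, one_mul]
      rw [this]; group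
  have key : ∀ x y : G, op 1 (x⁻¹ * y) = op 1 1 ↔ op 1 x = op 1 y := by
    intro x y
    constructor
    · intro h
      calc op 1 x = op 1 (x * 1) := by rw [mul_one]
        _ = op (op 1 x) (op 1 1) := L1 _ _
        _ = op (op 1 x) (op 1 (x⁻¹ * y)) := by rw [h]
        _ = op 1 (x * (x⁻¹ * y)) := (L1 _ _).symm
        _ = op 1 y := by rw [mul_inv_cancel_left]
    · intro h
      calc op 1 (x⁻¹ * y) = op (op 1 x⁻¹) (op 1 y) := L1 _ _
        _ = op (op 1 x⁻¹) (op 1 x) := by rw [h]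
        _ = op 1 (x⁻¹ * x) := (L1 _ _).symm
        _ = op 1 1 := by rw [inv_mul_cancel]
  -- the subgroup
  refine ⟨⟨⟨⟨⟨{d : G | op 1 d = op 1 1}, ?_⟩, ?_⟩, ?_⟩, ?_, ?_⟩, ?_, ?_⟩
  · -- mul closed
    rintro a b (ha : op 1 a = op 1 1) (hb : op 1 b = op 1 1)
    show op 1 (a * b) = op 1 1
    rw [L1, ha, hb, ← L1, one_mul]
  · -- one mem
    show op 1 (1 : G) = op 1 1; rfl
  · -- inv mem
    rintro a (ha : op 1 a = op 1 1)
    show op 1 a⁻¹ = op 1 1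
    calc op 1 a⁻¹ = op (op 1 1) (op 1 a⁻¹) := by rw [← L1, one_mul]
      _ = op (op 1 a) (op 1 a⁻¹) := by rw [ha]
      _ = op 1 (a * a⁻¹) := (L1 _ _).symm
      _ = op 1 1 := by rw [mul_inv_cancel]
  · -- normal
    constructor
    rintro a (ha : op 1 a = op 1 1) g
    show op 1 (g * a * g⁻¹) = op 1 1
    calc op 1 (g * a * g⁻¹) = op (op 1 (g * a)) (op 1 g⁻¹) := L1 _ _
      _ = op (op (op 1 g) (op 1 a)) (op 1 g⁻¹) := by rw [L1]
      _ = op (op 1 g) (op (op 1 1) (op 1 g⁻¹)) := hassoc _ _ _ |>.trans (by rw [ha])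
      _ = op (op 1 g) (op 1 g⁻¹) := by rw [← L1, one_mul]
      _ = op 1 (g * g⁻¹) := (L1 _ _).symm
      _ = op 1 1 := by rw [mul_inv_cancel]
  · -- set equality
    ext d
    exact (Iff.intro (fun h => h) (fun h => h)).trans (mem d).symm
  · -- the iff
    intro x y
    exact (mem _).trans (key x y)
  · -- the quotient map
    intro N _ hN
    have hmemN : ∀ d : G, d ∈ N ↔ op 1 d = op 1 1 := by
      intro d
      rw [← Subgroup.mem_carrier, show (N.carrier : Set G) = (N : Set G) from rfl, hN]
      exact mem d
    refine ⟨fun q => Quotient.liftOn' q (op 1) ?_, ?_, ?_, ?_, ?_⟩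
    · intro a b hab
      rw [QuotientGroup.leftRel_apply, hmemN] at hab
      exact (key a b).mp hab
    · intro x; rfl
    · intro q q'
      induction q using Quotient.inductionOn'
      induction q' using Quotient.inductionOn'
      intro h
      apply Quotient.sound'
      rw [QuotientGroup.leftRel_apply, hmemN]
      exact (key _ _).mpr h
    · ext g
      constructor
      · rintro ⟨q, rfl⟩
        induction q using Quotient.inductionOn' with
        | h x => exact ⟨x, rfl⟩
      · rintro ⟨x, rfl⟩
        exact ⟨QuotientGroup.mk x, rfl⟩
    · intro x y
      exact L1 x y
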